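/- Let a: E → [λ,1] (λ>0) be a symmetric coefficient field on the edges of Z^d, let φ, φ^b : Z^d → R solve the discrete corrector-type equations −∇*·a(∇φ + e) = 0 and −∇*·a^b(∇φ^b + e) = 0 where a^b differs from a only on the single edge b = (z_b, z_b+e_b), and assume the difference φ^b − φ has square-summable gradient. Then the energy estimate holds: Σ_{x∈Z^d} |∇(φ^b−φ)(x)|² ≤ C(λ) |∇φ(z_b) + e|², and in particular |∇φ^b(z_b) + e| ≤ C(λ) |∇φ(z_b) + e|. -/

import Mathlib

open scoped RealInnerProductSpace ENNReal

noncomputable section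

namespace SingleEdgeAux

private lemma liouville_le {d : ℕ} (i₀ : Fin d) (h : (Fin d → ℤ) → ℝ)
    (hsum : Summable fun x => h x ^ 2)
    (hharm : ∀ x, ∑ j, (h (x + Pi.single j 1) - 2 * h x + h (x - Pi.single j 1)) = 0) :
    ∀ x, h x ≤ 0 := by
  by_contra hc
  push_neg at hc
  obtain ⟨x₁, hx₁⟩ := hc
  haveI : Infinite (Fin d → ℤ) :=
    Infinite.of_injective (fun n : ℤ => (Pi.single i₀ n : Fin d → ℤ)) (by
      intro m n hmn
      have := congrFun hmn i₀
      simpa using this)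
  -- the set where h x ^ 2 is at least h x₁ ^ 2 is finite
  have hfin : {x : Fin d → ℤ | ¬ h x ^ 2 < h x₁ ^ 2}.Finite := by
    have ht := hsum.tendsto_cofinite_zero
    have : ∀ᶠ x in Filter.cofinite, h x ^ 2 < h x₁ ^ 2 := by
      have : Set.Iio (h x₁ ^ 2) ∈ nhds (0 : ℝ) := Iio_mem_nhds (by positivity)
      exact ht this
    simpa [Filter.eventually_cofinite] using this
  have hx₁mem : x₁ ∈ hfin.toFinset := by simp
  obtain ⟨x₀, hx₀mem, hx₀max⟩ := Finset.exists_max_image hfin.toFinset h ⟨x₁, hx₁mem⟩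
  set M := h x₀ with hM
  have hMpos : 0 < M := lt_of_lt_of_le hx₁ (hx₀max x₁ hx₁mem)
  have hglob : ∀ x, h x ≤ M := by
    intro x
    by_cases hx : x ∈ hfin.toFinset
    · exact hx₀max x hx
    · have : h x ^ 2 < h x₁ ^ 2 := by simpa using hx
      have hle : h x₁ ≤ M := hx₀max x₁ hx₁mem
      nlinarith
  -- propagation of the maximum
  have key : ∀ x, h x = M → ∀ j, h (x + Pi.single j 1) = M ∧ h (x - Pi.single j 1) = M := by
    intro x hx j
    have hzero : ∀ j' ∈ Finset.univ,
        (h (x + Pi.single j' 1) - 2 * h x + h (x - Pi.single j' 1)) = 0 := by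
      rw [← Finset.sum_eq_zero_iff_of_nonpos]
      · exact hharm x
      · intro j' _
        have := hglob (x + Pi.single j' 1)
        have := hglob (x - Pi.single j' 1)
        rw [hx]; linarith
    have := hzero j (Finset.mem_univ j)
    have h1 := hglob (x + Pi.single j 1)
    have h2 := hglob (x - Pi.single j 1)
    rw [hx] at this
    constructor <;> linarith
  have hstrong : ∀ n : ℕ, ∀ y : Fin d → ℤ, (∑ j, (y j).natAbs) = n → h (x₀ + y) = M := by
    intro n
    induction n using Nat.strong_induction_on with
    | _ n ih =>
      intro y hn
      rcases Nat.eq_zero_or_pos n with h0 | hpos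
      · subst h0
        have : ∀ j, (y j).natAbs = 0 := by
          intro j
          have := Finset.sum_eq_zero_iff.mp hn j (Finset.mem_univ j)
          exact this
        have hy : y = 0 := funext fun j => Int.natAbs_eq_zero.mp (this j)
        rw [hy, add_zero]
      · have : ∃ j, y j ≠ 0 := by
          by_contra hcon
          push_neg at hcon
          have : (∑ j, (y j).natAbs) = 0 := Finset.sum_eq_zero (fun j _ => by simp [hcon j])
          omega
        obtain ⟨j, hj⟩ := this
        rcases lt_or_gt_of_ne hj with hneg | hposj
        · -- y j < 0 : use y' = y + single j 1
          set y' := y + Pi.single j 1 with hy'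
          have hsum' : (∑ j', (y' j').natAbs) = n - 1 := by
            have hsplit : ∀ w : Fin d → ℤ, (∑ j', (w j').natAbs)
                = (w j).natAbs + ∑ j' ∈ Finset.univ.erase j, (w j').natAbs := by
              intro w
              rw [← Finset.add_sum_erase _ _ (Finset.mem_univ j)]
            have he : ∀ j' ∈ Finset.univ.erase j, (y' j').natAbs = (y j').natAbs := by
              intro j' hj'
              have : j' ≠ j := Finset.ne_of_mem_erase hj'
              simp [hy', Pi.single_apply, this]
            have hyj : y' j = y j + 1 := by simp [hy']
            rw [hsplit y', hsplit y, Finset.sum_congr rfl he] at *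
            rw [hyj]
            omega
          have hlt : n - 1 < n := by omega
          have ihy : h (x₀ + y') = M := ih (n - 1) hlt y' hsum'
          have hrw : x₀ + y = (x₀ + y') - Pi.single j 1 := by
            rw [hy']; abel
          rw [hrw]
          exact (key _ ihy j).2
        · set y' := y - Pi.single j 1 with hy'
          have hsum' : (∑ j', (y' j').natAbs) = n - 1 := by
            have hsplit : ∀ w : Fin d → ℤ, (∑ j', (w j').natAbs)
                = (w j).natAbs + ∑ j' ∈ Finset.univ.erase j, (w j').natAbs := by
              intro w
              rw [← Finset.add_sum_erase _ _ (Finset.mem_univ j)]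
            have he : ∀ j' ∈ Finset.univ.erase j, (y' j').natAbs = (y j').natAbs := by
              intro j' hj'
              have : j' ≠ j := Finset.ne_of_mem_erase hj'
              simp [hy', Pi.single_apply, this]
            have hyj : y' j = y j - 1 := by simp [hy']
            rw [hsplit y', hsplit y, Finset.sum_congr rfl he] at *
            rw [hyj]
            omega
          have hlt : n - 1 < n := by omega
          have ihy : h (x₀ + y') = M := ih (n - 1) hlt y' hsum'
          have hrw : x₀ + y = (x₀ + y') + Pi.single j 1 := by
            rw [hy']; abel
          rw [hrw]
          exact (key _ ihy j).1
  have hconst : ∀ x, h x = M := by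
    intro x
    have := hstrong _ (x - x₀) rfl
    rwa [add_sub_cancel] at this
  -- contradiction with summability
  have h1 : Filter.Tendsto (fun x : Fin d → ℤ => h x ^ 2) Filter.cofinite (nhds 0) :=
    hsum.tendsto_cofinite_zero
  have h2 : Filter.Tendsto (fun x : Fin d → ℤ => h x ^ 2) Filter.cofinite (nhds (M ^ 2)) := by
    have : (fun x : Fin d → ℤ => h x ^ 2) = fun _ => M ^ 2 := funext fun x => by rw [hconst x]
    rw [this]
    exact tendsto_const_nhds
  have := tendsto_nhds_unique h1 h2
  nlinarith

private lemma liouville {d : ℕ} (i₀ : Fin d) (h : (Fin d → ℤ) → ℝ)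
    (hsum : Summable fun x => h x ^ 2)
    (hharm : ∀ x, ∑ j, (h (x + Pi.single j 1) - 2 * h x + h (x - Pi.single j 1)) = 0) :
    ∀ x, h x = 0 := by
  have h1 := liouville_le i₀ h hsum hharm
  have hsum' : Summable fun x => (-h x) ^ 2 := by
    convert hsum using 2 with x
    ring
  have hharm' : ∀ x, ∑ j, ((fun y => -h y) (x + Pi.single j 1) - 2 * (fun y => -h y) x
      + (fun y => -h y) (x - Pi.single j 1)) = 0 := by
    intro x
    have heq : ∑ j, ((fun y => -h y) (x + Pi.single j 1) - 2 * (fun y => -h y) x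
        + (fun y => -h y) (x - Pi.single j 1))
        = -∑ j, (h (x + Pi.single j 1) - 2 * h x + h (x - Pi.single j 1)) := by
      rw [← Finset.sum_neg_distrib]
      exact Finset.sum_congr rfl fun j _ => by simp only; ring
    rw [heq, hharm x, neg_zero]
  have h2 := liouville_le i₀ (fun y => -h y) hsum' hharm'
  intro x
  have := h1 x
  have := h2 x
  linarith

variable {d : ℕ}

def grad (ψ : (Fin d → ℤ) → ℝ) : ((Fin d → ℤ) × Fin d) → ℝ :=
  fun p => ψ (p.1 + Pi.single p.2 1) - ψ p.1

def delta (y : Fin d → ℤ) : (Fin d → ℤ) → ℝ := fun x => if x = y then 1 else 0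

lemma grad_delta_apply (y : Fin d → ℤ) (p : (Fin d → ℤ) × Fin d) :
    grad (delta y) p = (if p.1 = y - Pi.single p.2 1 then (1:ℝ) else 0)
      - (if p.1 = y then (1:ℝ) else 0) := by
  unfold grad delta
  congr 1
  by_cases h : p.1 + Pi.single p.2 1 = y
  · rw [if_pos h, if_pos (by rw [← h]; abel)]
  · rw [if_neg h, if_neg (by intro hc; apply h; rw [hc]; abel)]

lemma support_ne_zero (y : Fin d → ℤ) (V : (Fin d → ℤ) × Fin d → ℝ) :
    ∀ p ∉ ((Finset.univ.image fun i : Fin d => ((y - Pi.single i 1 : Fin d → ℤ), i)) ∪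
        (Finset.univ.image fun i : Fin d => (y, i))),
      V p * grad (delta y) p = 0 := by
  intro p hp
  rw [Finset.mem_union, Finset.mem_image, Finset.mem_image] at hp
  push_neg at hp
  obtain ⟨h1, h2⟩ := hp
  have hy1 : p.1 ≠ y - Pi.single p.2 1 := by
    intro hc
    exact (h1 p.2 (Finset.mem_univ _) (by rw [← hc])).elim
  have hy2 : p.1 ≠ y := by
    intro hc
    exact (h2 p.2 (Finset.mem_univ _) (by rw [← hc])).elim
  rw [grad_delta_apply, if_neg hy1, if_neg hy2]
  ring

lemma summable_mul_grad_delta (y : Fin d → ℤ) (V : (Fin d → ℤ) × Fin d → ℝ) :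
    Summable (fun p => V p * grad (delta y) p) :=
  summable_of_ne_finset_zero (support_ne_zero y V)

lemma memℓp_grad_delta (y : Fin d → ℤ) : Memℓp (grad (delta y)) 2 := by
  apply memℓp_gen
  apply summable_of_ne_finset_zero (s := (Finset.univ.image fun i : Fin d =>
    ((y - Pi.single i 1 : Fin d → ℤ), i)) ∪ (Finset.univ.image fun i : Fin d => (y, i)))
  intro p hp
  have := support_ne_zero y (fun _ => 1) p hp
  rw [one_mul] at this
  rw [this]
  simp

lemma tsum_mul_grad_delta (y : Fin d → ℤ) (V : (Fin d → ℤ) × Fin d → ℝ) :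
    ∑' p, V p * grad (delta y) p = ∑ i, (V (y - Pi.single i 1, i) - V (y, i)) := by
  have hfun : (fun p => V p * grad (delta y) p)
      = fun p => (if p.1 = y - Pi.single p.2 1 then V p else 0)
        - (if p.1 = y then V p else 0) := by
    funext p
    rw [grad_delta_apply, mul_sub, mul_ite, mul_one, mul_zero, mul_ite, mul_one, mul_zero]
  rw [hfun]
  have hs1 : Summable (fun p : (Fin d → ℤ) × Fin d =>
      if p.1 = y - Pi.single p.2 1 then V p else 0) := by
    apply summable_of_ne_finset_zero (s := Finset.univ.image fun i : Fin d =>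
      ((y - Pi.single i 1 : Fin d → ℤ), i))
    intro p hp
    rw [Finset.mem_image] at hp
    push_neg at hp
    rw [if_neg]
    intro hc
    exact (hp p.2 (Finset.mem_univ _) (by rw [← hc])).elim
  have hs2 : Summable (fun p : (Fin d → ℤ) × Fin d => if p.1 = y then V p else 0) := by
    apply summable_of_ne_finset_zero (s := Finset.univ.image fun i : Fin d => (y, i))
    intro p hp
    rw [Finset.mem_image] at hp
    push_neg at hp
    rw [if_neg]
    intro hc
    exact (hp p.2 (Finset.mem_univ _) (by rw [← hc])).elim
  rw [Summable.tsum_sub hs1 hs2, Finset.sum_sub_distrib]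
  congr 1
  · rw [tsum_eq_sum (s := Finset.univ.image fun i : Fin d =>
      ((y - Pi.single i 1 : Fin d → ℤ), i)) (by
        intro p hp
        rw [Finset.mem_image] at hp
        push_neg at hp
        rw [if_neg]
        intro hc
        exact (hp p.2 (Finset.mem_univ _) (by rw [← hc])).elim)]
    rw [Finset.sum_image (by intro i _ j _ hij; exact (Prod.mk.injEq _ _ _ _ ▸ hij).2)]
    apply Finset.sum_congr rfl
    intro i _
    rw [if_pos rfl]
  · rw [tsum_eq_sum (s := Finset.univ.image fun i : Fin d => ((y : Fin d → ℤ), i)) (by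
        intro p hp
        rw [Finset.mem_image] at hp
        push_neg at hp
        rw [if_neg]
        intro hc
        exact (hp p.2 (Finset.mem_univ _) (by rw [← hc])).elim)]
    rw [Finset.sum_image (by intro i _ j _ hij; exact (Prod.mk.injEq _ _ _ _ ▸ hij).2)]
    apply Finset.sum_congr rfl
    intro i _
    rw [if_pos rfl]

abbrev E (d : ℕ) := lp (fun _ : (Fin d → ℤ) × Fin d => ℝ) 2

/-- evaluation as a continuous linear map -/
def ev (p : (Fin d → ℤ) × Fin d) : E d →L[ℝ] ℝ :=
  LinearMap.mkContinuous
    { toFun := fun f => f p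
      map_add' := fun f g => by simp [lp.coeFn_add]
      map_smul' := fun c f => by simp [lp.coeFn_smul] } 1
    (fun f => by rw [one_mul]; exact lp.norm_apply_le_norm two_ne_zero f p)

@[simp] lemma ev_apply (p : (Fin d → ℤ) × Fin d) (f : E d) : ev p f = f p := rfl

lemma inner_eq_tsum_mul (f g : E d) : ⟪f, g⟫ = ∑' p, f p * g p := by
  rw [lp.inner_eq_tsum]; exact tsum_congr fun p => by rw [RCLike.inner_apply, conj_trivial, mul_comm]

lemma curl_grad (ψ : (Fin d → ℤ) → ℝ) (x : Fin d → ℤ) (i j : Fin d) :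
    grad ψ (x, i) + grad ψ (x + Pi.single i 1, j)
      - grad ψ (x, j) - grad ψ (x + Pi.single j 1, i) = 0 := by
  unfold grad
  have h : x + Pi.single i 1 + Pi.single j 1 = x + Pi.single j 1 + Pi.single i 1 := by abel
  simp only
  rw [h]
  ring

theorem key_orthogonality (V F : (Fin d → ℤ) × Fin d → ℝ) (u : (Fin d → ℤ) → ℝ)
    (hV : Memℓp V 2) (hF : Memℓp F 2) (hFgrad : F = grad u)
    (hdiv : ∀ y, ∑ i, (V (y, i) - V (y - Pi.single i 1, i)) = 0) :
    ∑' p, V p * F p = 0 := by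
  classical
  set Fel : E d := ⟨F, hF⟩ with hFel
  set Vel : E d := ⟨V, hV⟩ with hVel
  set S : Set (E d) := Set.range (fun y : Fin d → ℤ =>
    (⟨grad (delta y), memℓp_grad_delta y⟩ : E d)) with hS
  set H : Submodule ℝ (E d) := (Submodule.span ℝ S).topologicalClosure with hH
  haveI : CompleteSpace H := (Submodule.isClosed_topologicalClosure _).completeSpace_coe
  have hgen_mem : ∀ y : Fin d → ℤ,
      (⟨grad (delta y), memℓp_grad_delta y⟩ : E d) ∈ H := fun y =>
    Submodule.le_topologicalClosure _ (Submodule.subset_span ⟨y, rfl⟩)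
  set G : E d := (Submodule.orthogonalProjection H Fel : E d) with hG
  set σ : E d := Fel - G with hσ
  have hσmem : σ ∈ Hᗮ := Submodule.sub_starProjection_mem_orthogonal (K := H) Fel
  -- σ is divergence free
  have hσdiv : ∀ y : Fin d → ℤ, ∑ i, ((σ : _ → ℝ) (y, i) - σ (y - Pi.single i 1, i)) = 0 := by
    intro y
    have h0 : ⟪(⟨grad (delta y), memℓp_grad_delta y⟩ : E d), σ⟫ = 0 :=
      (Submodule.mem_orthogonal H σ).mp hσmem _ (hgen_mem y)
    rw [inner_eq_tsum_mul] at h0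
    have : ∑' p, grad (delta y) p * (σ : _ → ℝ) p
        = ∑' p, (σ : _ → ℝ) p * grad (delta y) p := by
      congr 1; funext p; ring
    rw [show (fun p => ((⟨grad (delta y), memℓp_grad_delta y⟩ : E d) : _ → ℝ) p * (σ : _ → ℝ) p)
      = fun p => grad (delta y) p * (σ : _ → ℝ) p from rfl] at h0
    rw [this, tsum_mul_grad_delta] at h0
    have := Finset.sum_sub_distrib (f := fun i => (σ : _ → ℝ) (y - Pi.single i 1, i))
      (g := fun i => (σ : _ → ℝ) (y, i)) (s := Finset.univ)
    rw [Finset.sum_sub_distrib]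
    rw [Finset.sum_sub_distrib] at h0
    linarith
  -- curl functionals
  have hcurl : ∀ (x : Fin d → ℤ) (i j : Fin d),
      (σ : _ → ℝ) (x, i) + σ (x + Pi.single i 1, j)
        - σ (x, j) - σ (x + Pi.single j 1, i) = 0 := by
    intro x i j
    set L : E d →L[ℝ] ℝ :=
      ev (x, i) + ev (x + Pi.single i 1, j) - ev (x, j) - ev (x + Pi.single j 1, i) with hL
    have hLapp : ∀ f : E d, L f = f (x, i) + f (x + Pi.single i 1, j)
        - f (x, j) - f (x + Pi.single j 1, i) := fun f => rfl
    have hker : H ≤ L.ker := by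
      apply Submodule.topologicalClosure_minimal
      · rw [Submodule.span_le]
        rintro _ ⟨y, rfl⟩
        rw [SetLike.mem_coe]
        change L _ = 0
        rw [hLapp]
        exact curl_grad (delta y) x i j
      · exact ContinuousLinearMap.isClosed_ker L
    have hLG : L G = 0 := hker (Submodule.orthogonalProjection H Fel).2
    have hLF : L Fel = 0 := by
      rw [hLapp]
      show F (x, i) + F _ - F _ - F _ = 0
      rw [hFgrad]
      exact curl_grad u x i j
    have : L σ = 0 := by rw [hσ, map_sub, hLF, hLG, sub_zero]
    rw [hLapp] at this
    have hcoe : ((Fel - G : E d) : _ → ℝ) = fun p => (Fel : _ → ℝ) p - (G : _ → ℝ) p := by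
      rw [lp.coeFn_sub]; rfl
    exact this
  -- each slice of σ is harmonic and ℓ², hence zero
  have hσzero : ∀ p : (Fin d → ℤ) × Fin d, (σ : _ → ℝ) p = 0 := by
    rintro ⟨x, i⟩
    have hslice : Summable fun x : Fin d → ℤ => (σ : _ → ℝ) (x, i) ^ 2 := by
      have h1 : Summable fun p : (Fin d → ℤ) × Fin d => ‖(σ : _ → ℝ) p‖ ^ ((2:ℝ≥0∞).toReal) :=
        memℓp_gen_iff (by norm_num : 0 < (2:ℝ≥0∞).toReal) |>.mp (lp.memℓp σ)
      have h2 : Summable fun p : (Fin d → ℤ) × Fin d => (σ : _ → ℝ) p ^ 2 := by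
        convert h1 using 2 with p
        rw [ENNReal.toReal_ofNat, show ((2:ℝ)) = ((2:ℕ):ℝ) by norm_num, Real.rpow_natCast]
        simp [sq_abs]
      exact h2.comp_injective (fun x y hxy => by
        simpa [Prod.ext_iff] using hxy : Function.Injective fun x : Fin d → ℤ => (x, i))
    have hharm : ∀ x : Fin d → ℤ, ∑ j, ((σ : _ → ℝ) (x + Pi.single j 1, i)
        - 2 * (σ : _ → ℝ) (x, i) + (σ : _ → ℝ) (x - Pi.single j 1, i)) = 0 := by
      intro x
      have heq : ∀ j : Fin d, (σ : _ → ℝ) (x + Pi.single j 1, i)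
          - 2 * (σ : _ → ℝ) (x, i) + (σ : _ → ℝ) (x - Pi.single j 1, i)
          = ((σ : _ → ℝ) (x + Pi.single i 1, j)
              - (σ : _ → ℝ) (x + Pi.single i 1 - Pi.single j 1, j))
            - ((σ : _ → ℝ) (x, j) - (σ : _ → ℝ) (x - Pi.single j 1, j)) := by
        intro j
        have c1 := hcurl x j i
        have c2 := hcurl (x - Pi.single j 1) j i
        have e1 : x - Pi.single j 1 + Pi.single j 1 = x := by abel
        have e2 : x - Pi.single j 1 + Pi.single i 1 = x + Pi.single i 1 - Pi.single j 1 := by abel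
        rw [e1, e2] at c2
        linarith
      rw [Finset.sum_congr rfl (fun j _ => heq j)]
      rw [Finset.sum_sub_distrib]
      rw [hσdiv (x + Pi.single i 1), hσdiv x]
      ring
    exact liouville i (fun x => (σ : _ → ℝ) (x, i)) hslice hharm x
  -- hence F ∈ H
  have hσ0 : σ = 0 := by
    apply Subtype.ext
    funext p
    exact hσzero p
  have hFmem : Fel ∈ H := by
    have : Fel = G := by rw [← sub_eq_zero]; exact hσ0
    rw [this, hG]
    exact (Submodule.orthogonalProjection H Fel).2
  -- V is orthogonal to H
  have hVse : ∀ y : Fin d → ℤ, ⟪Vel, (⟨grad (delta y), memℓp_grad_delta y⟩ : E d)⟫ = 0 := by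
    intro y
    rw [inner_eq_tsum_mul]
    rw [show (fun p => (Vel : _ → ℝ) p * ((⟨grad (delta y), memℓp_grad_delta y⟩ : E d) : _ → ℝ) p)
      = fun p => V p * grad (delta y) p from rfl]
    rw [tsum_mul_grad_delta]
    have := hdiv y
    rw [Finset.sum_sub_distrib] at this ⊢
    linarith
  have hVH : H ≤ (innerSL ℝ Vel).ker := by
    apply Submodule.topologicalClosure_minimal
    · rw [Submodule.span_le]
      rintro _ ⟨y, rfl⟩
      rw [SetLike.mem_coe]
      change innerSL ℝ Vel _ = 0
      exact hVse y
    · exact ContinuousLinearMap.isClosed_ker _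
  have : ⟪Vel, Fel⟫ = 0 := hVH hFmem
  rw [inner_eq_tsum_mul] at this
  exact this

lemma memℓp_of_sq {ι : Type*} (f : ι → ℝ) (h : Summable fun i => f i ^ 2) : Memℓp f 2 := by
  apply memℓp_gen
  convert h using 2 with i
  rw [ENNReal.toReal_ofNat, show ((2:ℝ)) = ((2:ℕ):ℝ) by norm_num, Real.rpow_natCast]
  simp [sq_abs]


end SingleEdgeAux

/-- `φ` solves the discrete corrector equation `-∇*·a(∇φ + e) = 0` on `ℤ^d`, for the diagonal
coefficient field `a` (with `a x i` the conductance of the edge `(x, x+e_i)`). -/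
def solvesCorrector {d : ℕ} (a : (Fin d → ℤ) → Fin d → ℝ)
    (φ : (Fin d → ℤ) → ℝ) (e : Fin d → ℝ) : Prop :=
  ∀ x : Fin d → ℤ,
    ∑ i : Fin d,
      (a x i * ((φ (x + Pi.single i 1) - φ x) + e i)
        - a (x - Pi.single i 1) i * ((φ x - φ (x - Pi.single i 1)) + e i)) = 0

set_option maxHeartbeats 2000000 in
open SingleEdgeAux in
/-- **Energy estimate for a single-edge perturbation:** if `φ` and `φ^b` solve the corrector
equations for coefficient fields `a, a^b ∈ [λ,1]` differing only on the edge `b = (z, z+e_k)`,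
and `∇(φ^b - φ)` is square-summable, then
`Σ_x |∇(φ^b - φ)(x)|² ≤ C(λ) |∇φ(z) + e|²`, and in particular
`|∇φ^b(z) + e|² ≤ C(λ) |∇φ(z) + e|²`. -/
theorem single_edge_energy_estimate (lam : ℝ) (hlam : 0 < lam) :
    ∃ C : ℝ, 0 < C ∧
      ∀ (d : ℕ) (a a₂ : (Fin d → ℤ) → Fin d → ℝ),
        (∀ x i, lam ≤ a x i ∧ a x i ≤ 1) →
        (∀ x i, lam ≤ a₂ x i ∧ a₂ x i ≤ 1) →
        ∀ (z : Fin d → ℤ) (k : Fin d),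
        (∀ (x : Fin d → ℤ) (i : Fin d), ¬(x = z ∧ i = k) → a₂ x i = a x i) →
        ∀ (e : Fin d → ℝ) (φ φ₂ : (Fin d → ℤ) → ℝ),
        solvesCorrector a φ e → solvesCorrector a₂ φ₂ e →
        Summable (fun x : Fin d → ℤ => ∑ i : Fin d,
          ((φ₂ (x + Pi.single i 1) - φ₂ x) - (φ (x + Pi.single i 1) - φ x)) ^ 2) →
        (∑' x : Fin d → ℤ, ∑ i : Fin d,
            ((φ₂ (x + Pi.single i 1) - φ₂ x) - (φ (x + Pi.single i 1) - φ x)) ^ 2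
          ≤ C * ∑ i : Fin d, ((φ (z + Pi.single i 1) - φ z) + e i) ^ 2)
        ∧ ∑ i : Fin d, ((φ₂ (z + Pi.single i 1) - φ₂ z) + e i) ^ 2
          ≤ C * ∑ i : Fin d, ((φ (z + Pi.single i 1) - φ z) + e i) ^ 2 := by
  classical
  refine ⟨2 / lam ^ 2 + 2, by positivity, ?_⟩
  intro d a a₂ ha ha₂ z k hedge e φ φ₂ hφ hφ₂ hsum
  set C : ℝ := 2 / lam ^ 2 + 2 with hC
  -- the gradient of the difference
  set F : ((Fin d → ℤ) × Fin d) → ℝ := grad (fun x => φ₂ x - φ x) with hF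
  have hFeq : ∀ p : (Fin d → ℤ) × Fin d,
      F p = (φ₂ (p.1 + Pi.single p.2 1) - φ₂ p.1) - (φ (p.1 + Pi.single p.2 1) - φ p.1) := by
    intro p; simp only [hF, grad]; ring
  -- square-summability of F
  have hFsum : Summable fun p : (Fin d → ℤ) × Fin d => F p ^ 2 := by
    rw [summable_prod_of_nonneg (fun p => sq_nonneg _)]
    constructor
    · intro x; exact .of_finite
    · convert hsum using 1
      funext x
      rw [tsum_fintype]
      exact Finset.sum_congr rfl fun i _ => by rw [hFeq (x, i)]
  have hFmem : Memℓp F 2 := memℓp_of_sq F hFsum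
  -- the defect
  set g : ℝ := (a₂ z k - a z k) * ((φ (z + Pi.single k 1) - φ z) + e k) with hg
  set D : ((Fin d → ℤ) × Fin d) → ℝ := fun p => if p = (z, k) then g else 0 with hD
  have hDeq : ∀ p : (Fin d → ℤ) × Fin d,
      (a₂ p.1 p.2 - a p.1 p.2) * (grad φ p + e p.2) = D p := by
    rintro ⟨x, i⟩
    by_cases hp : (x, i) = (z, k)
    · obtain ⟨hx, hi⟩ := Prod.mk.injEq .. ▸ hp
      subst hx; subst hi
      simp only [hD, if_pos rfl, hg, grad]
    · have hxi : ¬(x = z ∧ i = k) := by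
        intro ⟨h1, h2⟩; exact hp (by rw [h1, h2])
      rw [hedge x i hxi]
      simp only [hD, if_neg hp, sub_self, zero_mul]
  set V : ((Fin d → ℤ) × Fin d) → ℝ := fun p => a₂ p.1 p.2 * F p + D p with hV
  have hVmem : Memℓp V 2 := by
    apply memℓp_of_sq
    have hDsum : Summable fun p : (Fin d → ℤ) × Fin d => D p ^ 2 := by
      apply summable_of_ne_finset_zero (s := {(z, k)})
      intro p hp
      rw [Finset.mem_singleton] at hp
      simp [hD, if_neg hp]
    refine Summable.of_nonneg_of_le (fun p => sq_nonneg _) (fun p => ?_)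
      ((hFsum.mul_left 2).add (hDsum.mul_left 2))
    have h1 := (ha₂ p.1 p.2).1
    have h2 := (ha₂ p.1 p.2).2
    simp only [hV]
    nlinarith [sq_nonneg (a₂ p.1 p.2 * F p - D p), sq_nonneg (F p), sq_nonneg (D p),
      mul_nonneg (mul_nonneg (sub_nonneg.2 h2) (by linarith : (0:ℝ) ≤ a₂ p.1 p.2 + 1))
        (sq_nonneg (F p))]
  -- divergence-freeness of V
  have hcorr : ∀ (b : (Fin d → ℤ) → Fin d → ℝ) (ψ : (Fin d → ℤ) → ℝ), solvesCorrector b ψ e →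
      ∀ y : Fin d → ℤ, ∑ i, ((fun p : (Fin d → ℤ) × Fin d => b p.1 p.2 * (grad ψ p + e p.2)) (y, i)
        - (fun p : (Fin d → ℤ) × Fin d => b p.1 p.2 * (grad ψ p + e p.2)) (y - Pi.single i 1, i)) = 0 := by
    intro b ψ hb y
    have := hb y
    rw [← this]
    apply Finset.sum_congr rfl
    intro i _
    have hyi : y - Pi.single i 1 + Pi.single i 1 = y := by abel
    simp only [grad, hyi]
  have hdivV : ∀ y : Fin d → ℤ, ∑ i, (V (y, i) - V (y - Pi.single i 1, i)) = 0 := by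
    intro y
    have hVsplit : ∀ p : (Fin d → ℤ) × Fin d,
        V p = a₂ p.1 p.2 * (grad φ₂ p + e p.2) - a p.1 p.2 * (grad φ p + e p.2) := by
      intro p
      rw [hV]
      simp only
      rw [← hDeq p]
      simp only [hF, grad]
      ring
    have h2 := hcorr a₂ φ₂ hφ₂ y
    have h1 := hcorr a φ hφ y
    calc ∑ i, (V (y, i) - V (y - Pi.single i 1, i))
        = ∑ i, (((fun p : (Fin d → ℤ) × Fin d => a₂ p.1 p.2 * (grad φ₂ p + e p.2)) (y, i)
            - (fun p : (Fin d → ℤ) × Fin d => a₂ p.1 p.2 * (grad φ₂ p + e p.2)) (y - Pi.single i 1, i))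
          - ((fun p : (Fin d → ℤ) × Fin d => a p.1 p.2 * (grad φ p + e p.2)) (y, i)
            - (fun p : (Fin d → ℤ) × Fin d => a p.1 p.2 * (grad φ p + e p.2)) (y - Pi.single i 1, i))) := by
          apply Finset.sum_congr rfl
          intro i _
          rw [hVsplit (y, i), hVsplit (y - Pi.single i 1, i)]
          ring
      _ = 0 := by rw [Finset.sum_sub_distrib, h1, h2]; ring
  -- the key orthogonality relation
  have hkey : ∑' p, V p * F p = 0 :=
    key_orthogonality V F (fun x => φ₂ x - φ x) hVmem hFmem rfl hdivV
  -- split the tsum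
  have hs1 : Summable fun p : (Fin d → ℤ) × Fin d => a₂ p.1 p.2 * F p ^ 2 := by
    refine Summable.of_nonneg_of_le (fun p => ?_) (fun p => ?_) hFsum
    · have := (ha₂ p.1 p.2).1
      exact mul_nonneg (by linarith) (sq_nonneg _)
    · have := (ha₂ p.1 p.2).2
      nlinarith [mul_nonneg (sub_nonneg.2 this) (sq_nonneg (F p))]
  have hs2 : Summable fun p : (Fin d → ℤ) × Fin d => D p * F p := by
    apply summable_of_ne_finset_zero (s := {(z, k)})
    intro p hp
    rw [Finset.mem_singleton] at hp
    simp [hD, if_neg hp]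
  have hsplit : (fun p => V p * F p)
      = fun p => a₂ p.1 p.2 * F p ^ 2 + D p * F p := by
    funext p; rw [hV]; simp only; ring
  have htsum2 : ∑' p, D p * F p = g * F (z, k) := by
    rw [tsum_eq_single (z, k)]
    · simp [hD]
    · intro p hp; simp [hD, if_neg hp]
  have hkey2 : (∑' p, a₂ p.1 p.2 * F p ^ 2) + g * F (z, k) = 0 := by
    rw [← htsum2, ← Summable.tsum_add hs1 hs2, ← hsplit, hkey]
  -- energy bounds
  set T : ℝ := ∑' p, F p ^ 2 with hT
  have hTnn : 0 ≤ T := tsum_nonneg fun p => sq_nonneg _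
  have hlamT : lam * T ≤ ∑' p, a₂ p.1 p.2 * F p ^ 2 := by
    rw [← tsum_mul_left]
    apply Summable.tsum_le_tsum _ (hFsum.mul_left lam) hs1
    intro p
    have := (ha₂ p.1 p.2).1
    nlinarith [mul_nonneg (sub_nonneg.2 this) (sq_nonneg (F p))]
  set B : ℝ := ((φ (z + Pi.single k 1) - φ z) + e k) ^ 2 with hB
  have hg2 : g ^ 2 ≤ B := by
    rw [hg, hB]
    have h1 := (ha z k).1
    have h2 := (ha z k).2
    have h3 := (ha₂ z k).1
    have h4 := (ha₂ z k).2
    have habs : (a₂ z k - a z k) ^ 2 ≤ 1 := by nlinarith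
    nlinarith [sq_nonneg ((φ (z + Pi.single k 1) - φ z) + e k)]
  have hFzk : F (z, k) ^ 2 ≤ T := Summable.le_tsum hFsum (z, k) fun p _ => sq_nonneg _
  have hTB : T ≤ B / lam ^ 2 := by
    have h5 : lam * T ≤ -(g * F (z, k)) := by linarith [hlamT, hkey2]
    have h6 : (lam * T) ^ 2 ≤ B * T := by
      have h0 : 0 ≤ lam * T := by positivity
      have h7 : (lam * T) ^ 2 ≤ (g * F (z, k)) ^ 2 := by nlinarith
      have h8 : (g * F (z, k)) ^ 2 ≤ B * T := by
        rw [mul_pow]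
        have hBnn : 0 ≤ B := le_trans (sq_nonneg _) hg2
        exact mul_le_mul hg2 hFzk (sq_nonneg _) hBnn
      linarith
    rcases eq_or_lt_of_le hTnn with h0 | h0
    · rw [← h0]
      positivity
    · rw [le_div_iff₀ (by positivity : (0:ℝ) < lam ^ 2)]
      nlinarith
  set A : ℝ := ∑ i, ((φ (z + Pi.single i 1) - φ z) + e i) ^ 2 with hA
  have hBA : B ≤ A := by
    rw [hB, hA]
    exact Finset.single_le_sum (f := fun i : Fin d => ((φ (z + Pi.single i 1) - φ z) + e i) ^ 2)
      (fun i _ => sq_nonneg _) (Finset.mem_univ k)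
  have hAnn : 0 ≤ A := Finset.sum_nonneg fun i _ => sq_nonneg _
  have hTA : T ≤ A / lam ^ 2 :=
    hTB.trans ((div_le_div_iff_of_pos_right (by positivity : (0:ℝ) < lam ^ 2)).mpr hBA)
  constructor
  · -- part 1
    have hTexpr : (∑' x : Fin d → ℤ, ∑ i : Fin d,
        ((φ₂ (x + Pi.single i 1) - φ₂ x) - (φ (x + Pi.single i 1) - φ x)) ^ 2) = T := by
      rw [hT, Summable.tsum_prod' hFsum (fun x => .of_finite)]
      congr 1
      funext x
      rw [tsum_fintype]
      exact Finset.sum_congr rfl fun i _ => by rw [hFeq (x, i)]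
    rw [hTexpr]
    have h2 : 1 / lam ^ 2 ≤ C := by
      rw [hC]
      have hl2 : (0:ℝ) < lam ^ 2 := by positivity
      have h12 : 1 / lam ^ 2 ≤ 2 / lam ^ 2 := (div_le_div_iff_of_pos_right hl2).mpr one_le_two
      linarith [h12]
    calc T ≤ A / lam ^ 2 := hTA
      _ = (1 / lam ^ 2) * A := by ring
      _ ≤ C * A := mul_le_mul_of_nonneg_right h2 hAnn
  · -- part 2
    have hpt : ∀ i : Fin d, (φ₂ (z + Pi.single i 1) - φ₂ z) + e i
        = F (z, i) + ((φ (z + Pi.single i 1) - φ z) + e i) := by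
      intro i
      rw [hFeq (z, i)]
      ring
    have hFz : ∑ i : Fin d, F (z, i) ^ 2 ≤ T := by
      have himg : ∑ i : Fin d, F (z, i) ^ 2
          = ∑ p ∈ Finset.univ.image (fun i : Fin d => ((z : Fin d → ℤ), i)), F p ^ 2 := by
        rw [Finset.sum_image (fun i _ j _ hij => (Prod.mk.injEq _ _ _ _ ▸ hij).2)]
      rw [himg, hT]
      exact Summable.sum_le_tsum _ (fun p _ => sq_nonneg _) hFsum
    calc ∑ i : Fin d, ((φ₂ (z + Pi.single i 1) - φ₂ z) + e i) ^ 2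
        = ∑ i : Fin d, (F (z, i) + ((φ (z + Pi.single i 1) - φ z) + e i)) ^ 2 :=
          Finset.sum_congr rfl fun i _ => by rw [hpt i]
      _ ≤ ∑ i : Fin d, (2 * F (z, i) ^ 2 + 2 * ((φ (z + Pi.single i 1) - φ z) + e i) ^ 2) :=
          Finset.sum_le_sum fun i _ => by
            nlinarith [sq_nonneg (F (z, i) - ((φ (z + Pi.single i 1) - φ z) + e i))]
      _ = 2 * (∑ i : Fin d, F (z, i) ^ 2) + 2 * A := by
          rw [Finset.sum_add_distrib, ← Finset.mul_sum, ← Finset.mul_sum, hA]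
      _ ≤ 2 * T + 2 * A := by linarith [hFz]
      _ ≤ C * A := by
          have : T ≤ A / lam ^ 2 := hTA
          rw [hC]
          have hl2 : (0:ℝ) < lam ^ 2 := by positivity
          have h9 : 2 * T ≤ 2 * (A / lam ^ 2) := by linarith
          have h10 : (2 / lam ^ 2 + 2) * A = 2 * (A / lam ^ 2) + 2 * A := by
            field_simp
          linarith
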